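/- Let G be the threshold graph encoded by a code consisting of t ≥ 0 zeros followed by a word w that is a concatenation of α copies of a = 01 and β copies of b = 10 in any order, where the final digit of w is the rightmost digit of the code. Then G has t + 2(α+β) vertices and exactly (α+β)² − α edges; in particular the number of edges does not depend on t or on the order of the letters a and b in w. -/

import Mathlib

/-!
Common definitions: threshold graphs from binary codes, counts of matchings and
independent sets, lex and colex graphs, and almost alternating codes.

A binary code is a `List Bool` whose head is the *leftmost* (most significant,
last added) digit; `true` stands for the digit `1` and `false` for `0`.
Reading the code from right to left, each digit adds a vertex: a `1` adds a
dominating vertex and a `0` adds an isolated vertex.  Equivalently, the vertex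
at position `i` (from the left) is adjacent to every vertex to its right iff
its digit is `1`.  Note that the value of the rightmost digit (the star) never
affects the graph.
-/

/-- The threshold graph encoded by a binary code `σ`. -/
def threshOf (σ : List Bool) : SimpleGraph (Fin σ.length) where
  Adj i j := i ≠ j ∧ σ.get (min i j) = true
  symm := by
    constructor
    intro i j h
    refine ⟨h.1.symm, ?_⟩
    rw [min_comm]
    exact h.2
  loopless := by
    constructor
    intro i h
    exact h.1 rfl

/-- The number of edges of a graph. -/
noncomputable def edgeCount {V : Type*} (G : SimpleGraph V) : ℕ := Nat.card G.edgeSet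

/-- `M` is a matching of `G`: a set of pairwise disjoint edges of `G`. -/
def IsMatchingSet {V : Type*} (G : SimpleGraph V) (M : Finset (Sym2 V)) : Prop :=
  (∀ e ∈ M, e ∈ G.edgeSet) ∧ ∀ e ∈ M, ∀ f ∈ M, e ≠ f → ∀ v : V, v ∈ e → v ∉ f

/-- `m(G)`: the total number of matchings of `G` (including the empty matching). -/
noncomputable def matchCount {V : Type*} (G : SimpleGraph V) : ℕ :=
  Nat.card {M : Finset (Sym2 V) // IsMatchingSet G M}

/-- `m_k(G)`: the number of matchings of `G` of size `k`. -/
noncomputable def matchCountK {V : Type*} (G : SimpleGraph V) (k : ℕ) : ℕ :=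
  Nat.card {M : Finset (Sym2 V) // IsMatchingSet G M ∧ M.card = k}

/-- `i(G)`: the number of independent sets of `G` (including the empty set). -/
noncomputable def indCount {V : Type*} (G : SimpleGraph V) : ℕ :=
  Nat.card {S : Finset V // ∀ u ∈ S, ∀ v ∈ S, ¬ G.Adj u v}

/-- `i_k(G)`: the number of independent sets of `G` of size `k`. -/
noncomputable def indCountK {V : Type*} (G : SimpleGraph V) (k : ℕ) : ℕ :=
  Nat.card {S : Finset V // (∀ u ∈ S, ∀ v ∈ S, ¬ G.Adj u v) ∧ S.card = k}

/-- Two codes encode the same threshold graph: they have the same length and agree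
except possibly in the rightmost (starred) digit. -/
def CodeEquiv (σ τ : List Bool) : Prop := σ.length = τ.length ∧ σ.dropLast = τ.dropLast

/-- Words that are concatenations of copies of the letters `a = 01` and `b = 10`. -/
inductive IsABWord : List Bool → Prop
  | nil : IsABWord []
  | a {w : List Bool} : IsABWord w → IsABWord (false :: true :: w)
  | b {w : List Bool} : IsABWord w → IsABWord (true :: false :: w)

/-- `w` is a concatenation of `α` copies of the letter `a = 01` and `β` copies of the
letter `b = 10`, in some order. -/
def IsABWordWith (α β : ℕ) (w : List Bool) : Prop :=
  ∃ ls : List (List Bool), (∀ x ∈ ls, x = [false, true] ∨ x = [true, false]) ∧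
    ls.count [false, true] = α ∧ ls.count [true, false] = β ∧ w = ls.flatten

/-- A code is almost alternating if (possibly after reinterpreting the starred rightmost
digit) it is an initial constant block followed by a word in the letters `a = 01` and
`b = 10`, either using the rightmost digit as the final digit of the last letter
(unstarred case) or keeping the rightmost digit separate after the word (starred case). -/
def IsAlmostAltCode (σ : List Bool) : Prop :=
  ∃ τ : List Bool, CodeEquiv σ τ ∧
    ∃ (t : ℕ) (c : Bool) (w : List Bool), IsABWord w ∧
      (τ = List.replicate t c ++ w ∨ ∃ d : Bool, τ = List.replicate t c ++ w ++ [d])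

/-- A small almost alternating code: the initial block consists of `0`'s (or is empty). -/
def IsSmallAACode (σ : List Bool) : Prop :=
  ∃ τ : List Bool, CodeEquiv σ τ ∧
    ∃ (t : ℕ) (w : List Bool), IsABWord w ∧
      (τ = List.replicate t false ++ w ∨ ∃ d : Bool, τ = List.replicate t false ++ w ++ [d])

/-- A large almost alternating code: the initial block is a nonempty block of `1`'s. -/
def IsLargeAACode (σ : List Bool) : Prop :=
  ∃ τ : List Bool, CodeEquiv σ τ ∧
    ∃ (t : ℕ) (w : List Bool), 1 ≤ t ∧ IsABWord w ∧
      (τ = List.replicate t true ++ w ∨ ∃ d : Bool, τ = List.replicate t true ++ w ++ [d])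

/-- A code has a bracketed string if (possibly after reinterpreting the starred rightmost
digit) it contains a substring `1 0^j 1` or `0 1^j 0` with `j ≥ 3`. -/
def HasBracketedString (σ : List Bool) : Prop :=
  ∃ τ : List Bool, CodeEquiv σ τ ∧ ∃ (x y : List Bool) (j : ℕ), 3 ≤ j ∧
    (τ = x ++ [true] ++ List.replicate j false ++ [true] ++ y ∨
     τ = x ++ [false] ++ List.replicate j true ++ [false] ++ y)

/-- A code has a separation issue if it contains two pairs of repeated digits separated by
a substring of odd length, where the first pair is immediately preceded by the opposite
digit and the second pair is followed by at least one further digit. -/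
def HasSeparationIssue (σ : List Bool) : Prop :=
  ∃ (x m y : List Bool) (d c : Bool),
    Odd m.length ∧ y ≠ [] ∧ σ = x ++ [!d, d, d] ++ m ++ [c, c] ++ y

/-- The colex graph `C(n,e)`: the graph on `Fin n` whose edges are the first `e` pairs in
the colexicographic order.  The pair `{i, j}` with `i < j` has rank `j(j-1)/2 + i` in
this order. -/
def colexGraph (n e : ℕ) : SimpleGraph (Fin n) where
  Adj i j := i ≠ j ∧ max i.val j.val * (max i.val j.val - 1) / 2 + min i.val j.val < e
  symm := by
    constructor
    intro i j h
    refine ⟨h.1.symm, ?_⟩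
    rw [max_comm j.val i.val, min_comm j.val i.val]
    exact h.2
  loopless := by
    constructor
    intro i h
    exact h.1 rfl

/-- The lex graph `L(n,e)`: the graph on `Fin n` whose edges are the first `e` pairs in
the lexicographic order.  The pair `{i, j}` with `i < j` has rank
`i(n-1) - i(i-1)/2 + (j - i - 1)` in this order. -/
def lexGraph (n e : ℕ) : SimpleGraph (Fin n) where
  Adj i j := i ≠ j ∧
    min i.val j.val * (n - 1) - min i.val j.val * (min i.val j.val - 1) / 2
      + (max i.val j.val - min i.val j.val - 1) < e
  symm := by
    constructor
    intro i j h
    refine ⟨h.1.symm, ?_⟩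
    rw [max_comm j.val i.val, min_comm j.val i.val]
    exact h.2
  loopless := by
    constructor
    intro i h
    exact h.1 rfl

def gval : List Bool → ℕ
  | [] => 0
  | (d :: σ) => (if d then σ.length else 0) + gval σ

lemma edgeCount_eq_sum (σ : List Bool) :
    edgeCount (threshOf σ) =
      ∑ i : Fin σ.length, (if σ.get i then σ.length - 1 - i.val else 0) := by
  classical
  set n := σ.length with hn
  have E : (threshOf σ).edgeSet ≃ {p : Fin n × Fin n // p.1 < p.2 ∧ σ.get p.1 = true} :=
    { toFun := fun e => ⟨(e.1.inf, e.1.sup), by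
        obtain ⟨e, he⟩ := e
        induction e using Sym2.ind with
        | _ i j =>
          rw [SimpleGraph.mem_edgeSet] at he
          obtain ⟨hne, hget⟩ := he
          simp only [Sym2.inf_mk, Sym2.sup_mk]
          refine ⟨inf_lt_sup.mpr hne, ?_⟩
          exact hget⟩
      invFun := fun p => ⟨s(p.1.1, p.1.2), by
        obtain ⟨⟨i, j⟩, hij, hget⟩ := p
        rw [SimpleGraph.mem_edgeSet]
        exact ⟨ne_of_lt hij, by rwa [min_eq_left hij.le]⟩⟩
      left_inv := by
        rintro ⟨e, he⟩
        apply Subtype.ext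
        induction e using Sym2.ind with
        | _ i j =>
          simp only [Sym2.inf_mk, Sym2.sup_mk]
          rcases le_total i j with h | h
          · rw [min_eq_left h, max_eq_right h]
          · rw [min_eq_right h, max_eq_left h]
            exact Sym2.eq_swap
      right_inv := by
        rintro ⟨⟨i, j⟩, hij, hget⟩
        apply Subtype.ext
        simp only [Sym2.inf_mk, Sym2.sup_mk]
        rw [min_eq_left hij.le, max_eq_right hij.le] }
  rw [edgeCount, Nat.card_congr E, Nat.card_eq_fintype_card,
    Fintype.card_congr (Equiv.subtypeProdEquivSigmaSubtype
      (fun (i j : Fin n) => i < j ∧ σ.get i = true)),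
    Fintype.card_sigma]
  refine Finset.sum_congr rfl fun i _ => ?_
  by_cases h : σ.get i = true
  · rw [if_pos h]
    rw [Fintype.card_congr (Equiv.subtypeEquivRight (q := fun j => j ∈ Set.Ioi i)
      (fun j => by simp only [Set.mem_Ioi]; exact ⟨fun hj => hj.1, fun hj => ⟨hj, h⟩⟩))]
    rw [Fintype.card_Ioi, Fin.card_Ioi]
  · rw [if_neg h]
    exact Fintype.card_eq_zero_iff.mpr ⟨fun x => absurd x.2.2 h⟩

lemma sum_eq_gval (σ : List Bool) :
    (∑ i : Fin σ.length, if σ.get i then σ.length - 1 - i.val else 0) = gval σ := by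
  induction σ with
  | nil => simp [gval]
  | cons d σ ih =>
    show (∑ i : Fin (σ.length + 1), if (d :: σ).get i = true then σ.length + 1 - 1 - ↑i else 0)
      = (if d then σ.length else 0) + gval σ
    rw [Fin.sum_univ_succ]
    have h0 : ((d :: σ).get (0 : Fin (σ.length + 1)) = d) := rfl
    simp only [h0, Fin.val_zero, Nat.sub_zero, Nat.add_sub_cancel]
    rw [← ih]
    congr 1
    refine Finset.sum_congr rfl fun i _ => ?_
    have hs : (d :: σ).get (Fin.succ i) = σ.get i := rfl
    rw [hs]
    congr 1
    simp [Fin.val_succ]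
    omega

lemma gval_replicate_false (t : ℕ) (w : List Bool) :
    gval (List.replicate t false ++ w) = gval w := by
  induction t with
  | zero => rfl
  | succ t ih => rw [List.replicate_succ, List.cons_append, gval, ih]; simp

lemma word_facts (ls : List (List Bool))
    (h : ∀ x ∈ ls, x = [false, true] ∨ x = [true, false]) :
    ls.flatten.length = 2 * ls.length ∧
    ls.count [false, true] + ls.count [true, false] = ls.length ∧
    gval ls.flatten + ls.count [false, true] = ls.length ^ 2 := by
  induction ls with
  | nil => simp [gval]
  | cons x ls ih =>
    obtain ⟨h1, h2, h3⟩ := ih (fun y hy => h y (List.mem_cons_of_mem _ hy))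
    have hsq : (ls.length + 1) ^ 2 = ls.length ^ 2 + 2 * ls.length + 1 := by ring
    rcases h x (List.mem_cons_self) with hx | hx <;> subst hx
    · have hfl : ([false, true] :: ls).flatten = false :: true :: ls.flatten := rfl
      have hg : gval (false :: true :: ls.flatten) = ls.flatten.length + gval ls.flatten := by
        simp [gval]
      have hc1 : ([false, true] :: ls).count [false, true] = ls.count [false, true] + 1 := by
        simp [List.count_cons]
      have hc2 : ([false, true] :: ls).count [true, false] = ls.count [true, false] := by
        simp [List.count_cons]
      refine ⟨?_, ?_, ?_⟩
      · rw [hfl]; simp only [List.length_cons]; omega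
      · rw [hc1, hc2, List.length_cons]; omega
      · rw [hfl, hg, hc1]; simp only [List.length_cons]; rw [hsq]; omega
    · have hfl : ([true, false] :: ls).flatten = true :: false :: ls.flatten := rfl
      have hg : gval (true :: false :: ls.flatten)
          = (false :: ls.flatten).length + gval ls.flatten := by simp [gval]
      have hc1 : ([true, false] :: ls).count [false, true] = ls.count [false, true] := by
        simp [List.count_cons]
      have hc2 : ([true, false] :: ls).count [true, false] = ls.count [true, false] + 1 := by
        simp [List.count_cons]
      refine ⟨?_, ?_, ?_⟩
      · rw [hfl]; simp only [List.length_cons]; omega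
      · rw [hc1, hc2, List.length_cons]; omega
      · rw [hfl, hg, hc1]; simp only [List.length_cons]; rw [hsq]; omega


/-- The threshold graph encoded by `t` zeros followed by a word `w`
made of `α` copies of `a = 01` and `β` copies of `b = 10` (in any order, the last digit
of `w` being the rightmost digit of the code) has `t + 2(α+β)` vertices and exactly
`(α+β)² − α` edges. -/
theorem small_unstarred_edge_count (t a b : ℕ) (w : List Bool)
    (hw : IsABWordWith a b w) :
    (List.replicate t false ++ w).length = t + 2 * (a + b) ∧
      edgeCount (threshOf (List.replicate t false ++ w)) = (a + b) ^ 2 - a := by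
  obtain ⟨ls, hls, ha, hb, hwls⟩ := hw
  obtain ⟨h1, h2, h3⟩ := word_facts ls hls
  subst hwls ha hb
  have hlen : ls.length = ls.count [false, true] + ls.count [true, false] := h2.symm
  constructor
  · simp [List.length_append, h1]; omega
  · rw [edgeCount_eq_sum, sum_eq_gval, gval_replicate_false]
    rw [← hlen]
    omega
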